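/- Let ν be a non-degenerate probability measure on a countable group G. If for every g ∈ G the total variation norm ‖g·ν^{*n} − ν^{*n}‖ tends to 0 as n → ∞, then the Poisson (tail) boundary of the ν-random walk on G is trivial. -/

import Mathlib

open MeasureTheory Filter Set
open scoped ENNReal

section

variable {G : Type*} [Group G] [MeasurableSpace G]

/-- The right random walk `Z n = X 1 ⋯ X n` read off the coordinates of `ω : ℕ → G`. -/
def rightWalk (n : ℕ) (ω : ℕ → G) : G := ((List.range n).map ω).prod

/-- The tail σ-algebra `⋂ j, σ(Z j, Z (j+1), …)` of a walk `Z`. -/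
def tailAlg (Z : ℕ → (ℕ → G) → G) : MeasurableSpace (ℕ → G) :=
  ⨅ j : ℕ, ⨆ i : ℕ, ⨆ _ : j ≤ i, MeasurableSpace.comap (Z i) ⊤

/-- The tail boundary of the walk `Z` is trivial under `P`. -/
def TailTrivial (Z : ℕ → (ℕ → G) → G) (P : Measure (ℕ → G)) : Prop :=
  ∀ s : Set (ℕ → G), MeasurableSet[tailAlg Z] s → P s = 0 ∨ P s = 1

/-- `P` makes the coordinates of `ℕ → G` i.i.d. with common law `ν`. -/
def IsIIDMeasure (ν : PMF G) (P : Measure (ℕ → G)) : Prop :=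
  ∀ (n : ℕ) (f : ℕ → G), P {ω | ∀ i < n, ω i = f i} = ∏ i ∈ Finset.range n, ν (f i)

/-- `ν` is non-degenerate: its support generates `G` as a semigroup. -/
def NonDegenerate (ν : PMF G) : Prop :=
  ∀ g : G, ∃ l : List G, l ≠ [] ∧ (∀ x ∈ l, x ∈ ν.support) ∧ l.prod = g

/-- Convolution of probability measures on a group. -/
noncomputable def PMF.conv (μ ρ : PMF G) : PMF G := μ.bind fun a => ρ.map (a * ·)

/-- `n`-fold convolution power `ν^{*n}`. -/
noncomputable def convPow (ν : PMF G) : ℕ → PMF G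
  | 0 => PMF.pure 1
  | n + 1 => (convPow ν n).conv ν

end


set_option linter.unusedSectionVars false

section
open MeasureTheory Filter
set_option linter.unusedSectionVars false
variable {G : Type*} [Group G] [MeasurableSpace G]

lemma map_mul_apply (ρ : PMF G) (a x : G) : (ρ.map (a * ·)) x = ρ (a⁻¹ * x) := by
  rw [PMF.map_apply]
  rw [tsum_eq_single (a⁻¹ * x)]
  · simp
  · intro b hb
    rw [if_neg]
    intro h; apply hb; rw [h]; group

lemma conv_apply (μ ρ : PMF G) (x : G) : (μ.conv ρ) x = ∑' a, μ a * ρ (a⁻¹ * x) := by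
  rw [PMF.conv, PMF.bind_apply]
  simp_rw [map_mul_apply]

lemma conv_assoc (μ ρ σ : PMF G) : (μ.conv ρ).conv σ = μ.conv (ρ.conv σ) := by
  ext x
  simp_rw [conv_apply]
  calc (∑' c, (∑' a, μ a * ρ (a⁻¹ * c)) * σ (c⁻¹ * x))
      = ∑' c, ∑' a, μ a * ρ (a⁻¹ * c) * σ (c⁻¹ * x) := by
        congr 1; funext c; exact ENNReal.tsum_mul_right.symm
    _ = ∑' a, ∑' c, μ a * ρ (a⁻¹ * c) * σ (c⁻¹ * x) := ENNReal.tsum_comm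
    _ = ∑' a, μ a * ∑' b, ρ b * σ (b⁻¹ * (a⁻¹ * x)) := by
        congr 1; funext a
        rw [← Equiv.tsum_eq (Equiv.mulLeft a) (fun c => μ a * ρ (a⁻¹ * c) * σ (c⁻¹ * x)),
          ← ENNReal.tsum_mul_left]
        congr 1; funext b
        simp [Equiv.coe_mulLeft, mul_assoc, mul_inv_rev]

lemma conv_pure_right (μ : PMF G) : μ.conv (PMF.pure 1) = μ := by
  ext x
  rw [conv_apply]
  rw [tsum_eq_single x]
  · simp [PMF.pure_apply]
  · intro b hb
    rw [PMF.pure_apply, if_neg, mul_zero]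
    intro h
    apply hb
    rw [inv_mul_eq_one] at h
    exact h

lemma convPow_add (ν : PMF G) (k m : ℕ) : convPow ν (k + m) = (convPow ν k).conv (convPow ν m) := by
  induction m with
  | zero => simp [convPow, conv_pure_right]
  | succ m ih => rw [← Nat.add_assoc]; simp only [convPow]; rw [ih, conv_assoc]

lemma convPow_apply_add (ν : PMF G) (k m : ℕ) (x : G) :
    convPow ν (k + m) x = ∑' a, convPow ν k a * convPow ν m (a⁻¹ * x) := by
  rw [convPow_add, conv_apply]

end

section
open MeasureTheory Filter Set
open scoped ENNReal
set_option linter.unusedSectionVars false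
variable {G : Type*} [Group G] [MeasurableSpace G]

/-- shift -/
def shf (n : ℕ) (ω : ℕ → G) : ℕ → G := fun i => ω (n + i)

def cylE (n : ℕ) (f : ℕ → G) : Set (ℕ → G) := {ω | ∀ i < n, ω i = f i}

noncomputable def wgt (ν : PMF G) (n : ℕ) (f : ℕ → G) : ℝ≥0∞ := ∏ i ∈ Finset.range n, ν (f i)

def fill (n : ℕ) (v : Fin n → G) : ℕ → G := fun i => if h : i < n then v ⟨i, h⟩ else 1

lemma rightWalk_zero (ω : ℕ → G) : rightWalk 0 ω = 1 := rfl

lemma rightWalk_succ (n : ℕ) (ω : ℕ → G) : rightWalk (n+1) ω = rightWalk n ω * ω n := by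
  simp [rightWalk, List.range_succ]

lemma rightWalk_add (n m : ℕ) (ω : ℕ → G) :
    rightWalk (n + m) ω = rightWalk n ω * rightWalk m (shf n ω) := by
  simp only [rightWalk, List.range_add, List.map_append, List.prod_append, List.map_map]
  rfl

lemma rightWalk_congr {n : ℕ} {ω ω' : ℕ → G} (h : ∀ i < n, ω i = ω' i) :
    rightWalk n ω = rightWalk n ω' := by
  unfold rightWalk
  congr 1
  apply List.map_congr_left
  intro i hi
  exact h i (List.mem_range.mp hi)

end

section

variable {G : Type*} [Group G] [Countable G] [MeasurableSpace G] [DiscreteMeasurableSpace G]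

lemma measurable_shf (n : ℕ) : Measurable (shf (G := G) n) :=
  measurable_pi_lambda _ fun i => measurable_pi_apply _

lemma measurable_toG {α : Type*} [MeasurableSpace α] {f : α → G}
    (h : ∀ g : G, MeasurableSet (f ⁻¹' {g})) : Measurable f :=
  measurable_to_countable' h

lemma measurable_mulG {α : Type*} [MeasurableSpace α] {f g : α → G}
    (hf : Measurable f) (hg : Measurable g) : Measurable (fun a => f a * g a) := by
  have : (fun a => f a * g a) = (fun p : G × G => p.1 * p.2) ∘ (fun a => (f a, g a)) := rfl
  rw [this]
  exact (Measurable.of_discrete).comp (hf.prodMk hg)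

lemma measurable_rightWalk (n : ℕ) : Measurable (rightWalk (G := G) n) := by
  induction n with
  | zero =>
      have : rightWalk (G := G) 0 = fun _ => 1 := funext fun ω => rightWalk_zero ω
      rw [this]; exact measurable_const
  | succ n ih =>
      have : rightWalk (G := G) (n+1) = fun ω => rightWalk n ω * ω n :=
        funext fun ω => rightWalk_succ n ω
      rw [this]
      exact measurable_mulG ih (measurable_pi_apply n)

lemma measurable_cylE (n : ℕ) (f : ℕ → G) : MeasurableSet (cylE n f) := by
  have : cylE n f = ⋂ i ∈ Finset.range n, (fun ω : ℕ → G => ω i) ⁻¹' {f i} := by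
    ext ω; simp [cylE]
  rw [this]
  exact Finset.measurableSet_biInter _ fun i _ =>
    (measurable_pi_apply i) (MeasurableSet.of_discrete)

lemma cylE_zero (f : ℕ → G) : cylE 0 f = Set.univ := by ext ω; simp [cylE]

/-- cylinders form a π-system generating the product σ-algebra -/
def cylSet : Set (Set (ℕ → G)) := {s | ∃ n f, s = cylE n f}

lemma isPiSystem_cylSet : IsPiSystem (cylSet (G := G)) := by
  rintro s ⟨n, f, rfl⟩ t ⟨m, f', rfl⟩ hne
  rcases hne with ⟨ω, hω1, hω2⟩
  rcases le_total n m with h | h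
  · refine ⟨m, f', ?_⟩
    apply subset_antisymm inter_subset_right
    intro ω' hω'
    refine ⟨fun i hi => ?_, hω'⟩
    rw [hω' i (lt_of_lt_of_le hi h), ← hω2 i (lt_of_lt_of_le hi h), hω1 i hi]
  · refine ⟨n, f, ?_⟩
    apply subset_antisymm inter_subset_left
    intro ω' hω'
    refine ⟨hω', fun i hi => ?_⟩
    rw [hω' i (lt_of_lt_of_le hi h), ← hω1 i (lt_of_lt_of_le hi h), hω2 i hi]

lemma generateFrom_cylSet :
    (MeasurableSpace.pi : MeasurableSpace (ℕ → G)) = .generateFrom (cylSet (G := G)) := by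
  apply le_antisymm
  · rw [MeasurableSpace.pi]
    apply iSup_le
    intro i
    rw [MeasurableSpace.comap_le_iff_le_map]
    intro t _
    show MeasurableSet[MeasurableSpace.generateFrom cylSet] ((fun ω : ℕ → G => ω i) ⁻¹' t)
    have : (fun ω : ℕ → G => ω i) ⁻¹' t = ⋃ v : {v : Fin (i+1) → G // v ⟨i, Nat.lt_succ_self i⟩ ∈ t},
        cylE (i+1) (fill (i+1) v.1) := by
      ext ω
      simp only [Set.mem_preimage, Set.mem_iUnion]
      constructor
      · intro h
        refine ⟨⟨fun j => ω j, h⟩, fun j hj => ?_⟩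
        simp [fill, hj]
      · rintro ⟨⟨v, hv⟩, hω⟩
        have := hω i (Nat.lt_succ_self i)
        simp only [fill, Nat.lt_succ_self, dif_pos] at this
        rw [this]; exact hv
    rw [this]
    exact MeasurableSet.iUnion fun v =>
      MeasurableSpace.measurableSet_generateFrom ⟨i+1, fill (i+1) v.1, rfl⟩
  · apply MeasurableSpace.generateFrom_le
    rintro s ⟨n, f, rfl⟩
    exact measurable_cylE n f

end

section
open MeasureTheory
variable {G : Type*} [Group G] [Countable G] [MeasurableSpace G] [DiscreteMeasurableSpace G]
variable {ν : PMF G} {P : Measure (ℕ → G)} [IsProbabilityMeasure P]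

def splice (n : ℕ) (f f' : ℕ → G) : ℕ → G := fun i => if i < n then f i else f' (i - n)

lemma P_cylE (hiid : IsIIDMeasure ν P) (n : ℕ) (f : ℕ → G) : P (cylE n f) = wgt ν n f :=
  hiid n f

lemma cylE_inter_shf (n m : ℕ) (f f' : ℕ → G) :
    cylE n f ∩ shf n ⁻¹' cylE m f' = cylE (n + m) (splice n f f') := by
  ext ω
  simp only [Set.mem_inter_iff, Set.mem_preimage, cylE, Set.mem_setOf_eq, shf, splice]
  constructor
  · rintro ⟨h1, h2⟩ i hi
    by_cases h : i < n
    · rw [if_pos h]; exact h1 i h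
    · rw [if_neg h]
      have heq : n + (i - n) = i := by omega
      have h3 := h2 (i - n) (by omega)
      rwa [heq] at h3
  · intro h
    constructor
    · intro i hi
      have := h i (by omega)
      rwa [if_pos hi] at this
    · intro i hi
      have := h (n + i) (by omega)
      rw [if_neg (by omega)] at this
      simpa using this

lemma wgt_splice (n m : ℕ) (f f' : ℕ → G) :
    wgt ν (n + m) (splice n f f') = wgt ν n f * wgt ν m f' := by
  unfold wgt
  rw [Finset.prod_range_add]
  congr 1
  · apply Finset.prod_congr rfl
    intro i hi
    rw [Finset.mem_range] at hi
    simp [splice, hi]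
  · apply Finset.prod_congr rfl
    intro i _
    simp [splice]

lemma wgt_le_one (n : ℕ) (f : ℕ → G) : wgt ν n f ≤ 1 := by
  unfold wgt
  calc ∏ i ∈ Finset.range n, ν (f i) ≤ ∏ i ∈ Finset.range n, 1 :=
    Finset.prod_le_prod' fun i _ => PMF.coe_le_one ν (f i)
  _ = 1 := Finset.prod_const_one

lemma indep_cylE (hiid : IsIIDMeasure ν P) (n : ℕ) (f : ℕ → G) {T : Set (ℕ → G)}
    (hT : MeasurableSet T) : P (cylE n f ∩ shf n ⁻¹' T) = wgt ν n f * P T := by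
  have key : (P.restrict (cylE n f)).map (shf n) = wgt ν n f • P := by
    have hfin : IsFiniteMeasure ((P.restrict (cylE n f)).map (shf n)) := by
      constructor
      rw [Measure.map_apply (measurable_shf n) MeasurableSet.univ]
      exact lt_of_le_of_lt (le_trans (Measure.restrict_le_self _) prob_le_one) ENNReal.one_lt_top
    refine ext_of_generate_finite cylSet generateFrom_cylSet isPiSystem_cylSet ?_ ?_
    · rintro s ⟨m, f', rfl⟩
      rw [Measure.map_apply (measurable_shf n) (measurable_cylE m f'),
        Measure.restrict_apply (measurable_shf n (measurable_cylE m f')),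
        Set.inter_comm, cylE_inter_shf, P_cylE hiid, wgt_splice]
      simp [P_cylE hiid]
    · rw [Measure.map_apply (measurable_shf n) MeasurableSet.univ]
      simp [Measure.restrict_apply, P_cylE hiid]
  calc P (cylE n f ∩ shf n ⁻¹' T)
      = ((P.restrict (cylE n f)).map (shf n)) T := by
        rw [Measure.map_apply (measurable_shf n) hT, Measure.restrict_apply (measurable_shf n hT),
          Set.inter_comm]
    _ = wgt ν n f * P T := by rw [key]; simp

end

section
open MeasureTheory
variable {G : Type*} [Group G] [Countable G] [MeasurableSpace G] [DiscreteMeasurableSpace G]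
variable {ν : PMF G} {P : Measure (ℕ → G)} [IsProbabilityMeasure P]

/-- `B` depends only on the first `N` coordinates. -/
def Det (N : ℕ) (B : Set (ℕ → G)) : Prop :=
  ∀ ω ω' : ℕ → G, (∀ i < N, ω i = ω' i) → ω ∈ B → ω' ∈ B

lemma fill_agree (N : ℕ) (ω : ℕ → G) : ∀ i < N, fill N (fun j : Fin N => ω j) i = ω i := by
  intro i hi; simp [fill, hi]

lemma det_eq_iUnion {N : ℕ} {B : Set (ℕ → G)} (hB : Det N B) :
    B = ⋃ v : {v : Fin N → G // fill N v ∈ B}, cylE N (fill N v.1) := by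
  ext ω
  simp only [Set.mem_iUnion]
  constructor
  · intro h
    refine ⟨⟨fun j => ω j, hB ω _ (fun i hi => (fill_agree N ω i hi).symm) h⟩, ?_⟩
    intro i hi
    exact (fill_agree N ω i hi).symm
  · rintro ⟨⟨v, hv⟩, hω⟩
    exact hB (fill N v) ω (fun i hi => (hω i hi).symm) hv

lemma cylE_fill_disjoint {N : ℕ} : Pairwise fun v v' : Fin N → G =>
    Disjoint (cylE N (fill N v)) (cylE N (fill N v')) := by
  intro v v' hvv'
  rw [Set.disjoint_left]
  intro ω h1 h2
  apply hvv'
  funext i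
  have e1 := h1 i i.2
  have e2 := h2 i i.2
  simp only [fill, i.2, dif_pos] at e1 e2
  rw [← e1, ← e2]

lemma det_measurable {N : ℕ} {B : Set (ℕ → G)} (hB : Det N B) : MeasurableSet B := by
  rw [det_eq_iUnion hB]
  exact MeasurableSet.iUnion fun v => measurable_cylE _ _

lemma indep_det (hiid : IsIIDMeasure ν P) {N : ℕ} {B : Set (ℕ → G)} (hB : Det N B)
    {T : Set (ℕ → G)} (hT : MeasurableSet T) :
    P (B ∩ shf N ⁻¹' T) = P B * P T := by
  rw [det_eq_iUnion hB, Set.iUnion_inter]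
  rw [measure_iUnion ?_ (fun v => (measurable_cylE _ _).inter (measurable_shf N hT)),
    measure_iUnion ?_ (fun v => measurable_cylE _ _)]
  · rw [tsum_congr (fun v : {v : Fin N → G // fill N v ∈ B} => indep_cylE hiid N (fill N v.1) hT),
      tsum_congr (fun v : {v : Fin N → G // fill N v ∈ B} => P_cylE hiid N (fill N v.1)),
      ENNReal.tsum_mul_right]
  · intro v v' hvv'
    exact cylE_fill_disjoint (fun h => hvv' (Subtype.ext h))
  · intro v v' hvv'
    exact Set.disjoint_left.mpr fun ω h1 h2 =>
      Set.disjoint_left.mp (cylE_fill_disjoint (G := G) (fun h => hvv' (Subtype.ext h))) h1.1 h2.1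

end

section
open MeasureTheory
variable {G : Type*} [Group G] [Countable G] [MeasurableSpace G] [DiscreteMeasurableSpace G]
variable {ν : PMF G} {P : Measure (ℕ → G)} [IsProbabilityMeasure P]

lemma det_walk (m : ℕ) (g : G) : Det m (rightWalk (G := G) m ⁻¹' {g}) := by
  intro ω ω' h hω
  simp only [Set.mem_preimage, Set.mem_singleton_iff] at hω ⊢
  rw [← rightWalk_congr h]
  exact hω

lemma law_walk (hiid : IsIIDMeasure ν P) (m : ℕ) (g : G) :
    P (rightWalk m ⁻¹' {g}) = convPow ν m g := by
  induction m generalizing g with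
  | zero =>
      by_cases h : g = 1
      · subst h
        have : rightWalk (G := G) 0 ⁻¹' {1} = Set.univ := by
          ext ω; simp [rightWalk_zero]
        rw [this]
        simp [convPow, PMF.pure_apply]
      · have : rightWalk (G := G) 0 ⁻¹' {g} = ∅ := by
          ext ω; simp [rightWalk_zero]; exact fun hc => h hc.symm
        rw [this]
        simp [convPow, PMF.pure_apply, Ne.symm h, h]
  | succ m ih =>
      have hdecomp : rightWalk (G := G) (m+1) ⁻¹' {g} =
          ⋃ a : G, (rightWalk m ⁻¹' {a}) ∩ shf m ⁻¹' ((fun ω : ℕ → G => ω 0) ⁻¹' {a⁻¹ * g}) := by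
        ext ω
        simp only [Set.mem_preimage, Set.mem_singleton_iff, Set.mem_iUnion, Set.mem_inter_iff,
          rightWalk_succ]
        constructor
        · intro h
          refine ⟨rightWalk m ω, rfl, ?_⟩
          simp only [shf, Nat.add_zero]
          rw [← h]; group
        · rintro ⟨a, h1, h2⟩
          simp only [shf, Nat.add_zero] at h2
          rw [h1, h2]
          group
      rw [hdecomp, measure_iUnion]
      · have heval : ∀ a : G, ((fun ω : ℕ → G => ω 0) ⁻¹' {a⁻¹ * g}) = cylE 1 (fun _ => a⁻¹ * g) := by
          intro a; ext ω
          simp only [Set.mem_preimage, Set.mem_singleton_iff, cylE, Set.mem_setOf_eq]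
          constructor
          · intro h i hi
            interval_cases i
            exact h
          · intro h; exact h 0 (by omega)
        have : ∀ a : G, P ((rightWalk m ⁻¹' {a}) ∩ shf m ⁻¹' ((fun ω : ℕ → G => ω 0) ⁻¹' {a⁻¹ * g}))
            = convPow ν m a * ν (a⁻¹ * g) := by
          intro a
          rw [heval a, indep_det hiid (det_walk m a) (measurable_cylE _ _), ih a,
            P_cylE hiid]
          congr 1
          simp [wgt]
        rw [tsum_congr this]
        show _ = convPow ν (m + 1) g
        rw [show m + 1 = m + 1 from rfl]
        simp only [convPow]
        rw [conv_apply]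
      · intro a a' haa'
        rw [Function.onFun]
        apply Set.disjoint_left.mpr
        rintro ω ⟨h1, _⟩ ⟨h2, _⟩
        simp only [Set.mem_preimage, Set.mem_singleton_iff] at h1 h2
        exact haa' (h1 ▸ h2 ▸ rfl)
      · intro a
        exact (det_measurable (det_walk m a)).inter
          (measurable_shf m ((measurable_pi_apply 0) (MeasurableSet.of_discrete)))

end

section
set_option linter.unusedSectionVars false
variable {G : Type*} [Group G]

-- stand-ins (in real file these exist)
variable (μ : ℕ → G → ℝ≥0∞) -- convPow ν
-- we work abstractly over PMFs
variable (ν : PMF G)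

noncomputable def mr (ρ : PMF G) (g : G) : ℝ := (ρ g).toReal

lemma mr_nonneg (ρ : PMF G) (g : G) : 0 ≤ mr ρ g := ENNReal.toReal_nonneg

lemma summable_mr (ρ : PMF G) : Summable (mr ρ) :=
  ENNReal.summable_toReal (by rw [PMF.tsum_coe]; exact ENNReal.one_ne_top)

lemma tsum_mr (ρ : PMF G) : ∑' g, mr ρ g = 1 := by
  unfold mr
  rw [← ENNReal.tsum_toReal_eq (fun g => PMF.apply_ne_top ρ g), PMF.tsum_coe, ENNReal.toReal_one]

lemma summable_mr_shift (ρ : PMF G) (a : G) : Summable (fun g => mr ρ (a * g)) :=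
  (summable_mr ρ).comp_injective (mul_right_injective a)

lemma tsum_mr_shift (ρ : PMF G) (a : G) : ∑' g, mr ρ (a * g) = 1 := by
  have : ∑' g, mr ρ (a * g) = ∑' g, mr ρ g := Equiv.tsum_eq (Equiv.mulLeft a) (mr ρ)
  rw [this, tsum_mr]

end

section
set_option linter.unusedSectionVars false
variable {G : Type*} [Group G]

lemma mr_le_one (ρ : PMF G) (g : G) : mr ρ g ≤ 1 := by
  have := ENNReal.toReal_mono ENNReal.one_ne_top (PMF.coe_le_one ρ g)
  simpa [mr] using this

noncomputable def tv (ρ : PMF G) (a : G) : ℝ := ∑' x : G, |mr ρ (a⁻¹ * x) - mr ρ x|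

lemma tv_nonneg (ρ : PMF G) (a : G) : 0 ≤ tv ρ a :=
  tsum_nonneg fun x => abs_nonneg _

lemma summable_tv_int (ρ : PMF G) (a : G) :
    Summable fun x => |mr ρ (a⁻¹ * x) - mr ρ x| := by
  apply Summable.of_nonneg_of_le (fun x => abs_nonneg _)
    (fun x => (abs_sub _ _).trans ?_) ((summable_mr_shift ρ a⁻¹).add (summable_mr ρ))
  rw [abs_of_nonneg (mr_nonneg _ _), abs_of_nonneg (mr_nonneg _ _)]

lemma tv_le_two (ρ : PMF G) (a : G) : tv ρ a ≤ 2 := by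
  have h1 : tv ρ a ≤ ∑' x : G, (mr ρ (a⁻¹ * x) + mr ρ x) := by
    apply Summable.tsum_le_tsum _ (summable_tv_int ρ a) ((summable_mr_shift ρ a⁻¹).add (summable_mr ρ))
    intro x
    calc |mr ρ (a⁻¹ * x) - mr ρ x| ≤ |mr ρ (a⁻¹ * x)| + |mr ρ x| := abs_sub _ _
    _ = mr ρ (a⁻¹ * x) + mr ρ x := by
        rw [abs_of_nonneg (mr_nonneg _ _), abs_of_nonneg (mr_nonneg _ _)]
  rw [Summable.tsum_add (summable_mr_shift ρ a⁻¹) (summable_mr ρ), tsum_mr_shift, tsum_mr] at h1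
  linarith

set_option maxHeartbeats 1000000 in
lemma main_bound (κ ρ τ : PMF G) (hconv : ∀ g, mr τ g = ∑' a : G, mr κ a * mr ρ (a⁻¹ * g))
    (b : G) (H : G → ℝ) (hH0 : ∀ c, 0 ≤ H c) (hH1 : ∀ c, H c ≤ 1) :
    |(∑' g : G, mr ρ g * H (b * g)) - ∑' g : G, mr τ g * H g| ≤
      tv ρ b + ∑' a : G, mr κ a * tv ρ a := by
  -- reindex first sum
  have e0 : ∑' g : G, mr ρ g * H (b * g) = ∑' g : G, mr ρ (b⁻¹ * g) * H g := by
    rw [← Equiv.tsum_eq (Equiv.mulLeft b) (fun g => mr ρ (b⁻¹ * g) * H g)]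
    apply tsum_congr; intro g
    simp [Equiv.coe_mulLeft, inv_mul_cancel_left]
  set x : G → ℝ := fun g => mr ρ (b⁻¹ * g) with hxdef
  set y : G → ℝ := fun g => mr τ g with hydef
  have hx : Summable x := summable_mr_shift ρ b⁻¹
  have hy : Summable y := summable_mr τ
  have hxH : Summable fun g => x g * H g :=
    Summable.of_nonneg_of_le (fun g => mul_nonneg (mr_nonneg _ _) (hH0 g))
      (fun g => mul_le_of_le_one_right (mr_nonneg _ _) (hH1 g)) hx
  have hyH : Summable fun g => y g * H g :=
    Summable.of_nonneg_of_le (fun g => mul_nonneg (mr_nonneg _ _) (hH0 g))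
      (fun g => mul_le_of_le_one_right (mr_nonneg _ _) (hH1 g)) hy
  -- difference inside one tsum
  have e1 : (∑' g : G, mr ρ g * H (b * g)) - ∑' g : G, mr τ g * H g
      = ∑' g : G, (x g - y g) * H g := by
    rw [e0]
    rw [← Summable.tsum_sub hxH hyH]
    apply tsum_congr; intro g; ring
  rw [e1]
  -- pointwise bounds
  set u : G → ℝ := fun g => |x g - mr ρ g| with hudef
  set v : G → ℝ := fun g => |mr ρ g - y g| with hvdef
  have hu : Summable u := summable_tv_int ρ b
  have hv : Summable v := by
    apply Summable.of_nonneg_of_le (fun g => abs_nonneg _)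
      (fun g => (abs_sub _ _).trans ?_) ((summable_mr ρ).add hy)
    rw [abs_of_nonneg (mr_nonneg _ _), abs_of_nonneg (mr_nonneg _ _)]
  have habs : ∀ g, |(x g - y g) * H g| ≤ u g + v g := by
    intro g
    rw [abs_mul]
    calc |x g - y g| * |H g| ≤ |x g - y g| * 1 :=
      mul_le_mul_of_nonneg_left (abs_le.mpr ⟨by linarith [hH0 g], hH1 g⟩) (abs_nonneg _)
    _ = |x g - y g| := mul_one _
    _ ≤ u g + v g := by
        have : x g - y g = (x g - mr ρ g) + (mr ρ g - y g) := by ring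
        rw [this]
        exact (abs_add_le _ _)
  -- the double-sum bound for v
  set F : G × G → ℝ := fun p => mr κ p.2 * |mr ρ p.1 - mr ρ (p.2⁻¹ * p.1)| with hFdef
  have hAB : Summable fun p : G × G => mr κ p.1 * mr ρ p.2 :=
    Summable.mul_of_nonneg (summable_mr κ) (summable_mr ρ) (fun a => mr_nonneg _ _)
      (fun a => mr_nonneg _ _)
  have hB1 : Summable fun p : G × G => mr κ p.2 * mr ρ p.1 := by
    have := (Equiv.prodComm G G).summable_iff.mpr hAB
    exact this
  have hB2 : Summable fun p : G × G => mr κ p.2 * mr ρ (p.2⁻¹ * p.1) := by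
    have hτ : Summable ((fun p : G × G => mr κ p.2 * mr ρ p.1) ∘
        ((Equiv.prodComm G G).trans ((Equiv.prodShear (Equiv.refl G)
          (fun a => Equiv.mulLeft a⁻¹)).trans (Equiv.prodComm G G)))) :=
      (Equiv.summable_iff _).mpr hB1
    exact hτ
  have hF : Summable F := by
    apply Summable.of_nonneg_of_le
      (fun p => mul_nonneg (mr_nonneg _ _) (abs_nonneg _))
      (fun p => ?_) (hB1.add hB2)
    calc mr κ p.2 * |mr ρ p.1 - mr ρ (p.2⁻¹ * p.1)|
        ≤ mr κ p.2 * (mr ρ p.1 + mr ρ (p.2⁻¹ * p.1)) := by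
          apply mul_le_mul_of_nonneg_left _ (mr_nonneg _ _)
          refine (abs_sub _ _).trans ?_
          rw [abs_of_nonneg (mr_nonneg _ _), abs_of_nonneg (mr_nonneg _ _)]
      _ = mr κ p.2 * mr ρ p.1 + mr κ p.2 * mr ρ (p.2⁻¹ * p.1) := by ring
  have hVrow : ∀ g, Summable fun a => F (g, a) := fun g => hF.prod_factor g
  have hV : ∀ g, v g ≤ ∑' a : G, F (g, a) := by
    intro g
    have hsum1 : Summable fun a : G => mr κ a * mr ρ g := (summable_mr κ).mul_right _
    have hsum2 : Summable fun a : G => mr κ a * mr ρ (a⁻¹ * g) :=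
      Summable.of_nonneg_of_le (fun a => mul_nonneg (mr_nonneg _ _) (mr_nonneg _ _))
        (fun a => mul_le_of_le_one_right (mr_nonneg _ _) (mr_le_one _ _)) (summable_mr κ)
    have hrg : mr ρ g = ∑' a : G, mr κ a * mr ρ g := by
      rw [tsum_mul_right, tsum_mr, one_mul]
    have hdiff : mr ρ g - y g = ∑' a : G, (mr κ a * mr ρ g - mr κ a * mr ρ (a⁻¹ * g)) := by
      rw [Summable.tsum_sub hsum1 hsum2, ← hrg, hydef]
      simp only [hconv g]
    have habs' : Summable fun a : G => |mr κ a * mr ρ g - mr κ a * mr ρ (a⁻¹ * g)| := by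
      have heqF : (fun a : G => |mr κ a * mr ρ g - mr κ a * mr ρ (a⁻¹ * g)|)
          = fun a : G => F (g, a) := by
        funext a
        rw [hFdef]
        simp only [← mul_sub, abs_mul, abs_of_nonneg (mr_nonneg κ a)]
      rw [heqF]
      exact hVrow g
    calc v g = |∑' a : G, (mr κ a * mr ρ g - mr κ a * mr ρ (a⁻¹ * g))| := by
          rw [hvdef]; simp only [hdiff]
      _ ≤ ∑' a : G, |mr κ a * mr ρ g - mr κ a * mr ρ (a⁻¹ * g)| := by
          have := norm_tsum_le_tsum_norm
            (f := fun a : G => mr κ a * mr ρ g - mr κ a * mr ρ (a⁻¹ * g))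
            (by simpa only [Real.norm_eq_abs] using habs')
          simpa only [Real.norm_eq_abs] using this
      _ = ∑' a : G, F (g, a) := by
          apply tsum_congr; intro a
          rw [hFdef]
          simp only [← mul_sub, abs_mul, abs_of_nonneg (mr_nonneg κ a)]
  have hVsum : Summable fun g => ∑' a : G, F (g, a) :=
    ⟨_, hF.hasSum.prod_fiberwise (fun g => (hVrow g).hasSum)⟩
  have hswap : ∑' g, ∑' a : G, F (g, a) = ∑' a : G, mr κ a * tv ρ a := by
    have h1 : ∑' g, ∑' a : G, F (g, a) = ∑' p : G × G, F p :=
      (Summable.tsum_prod' hF hVrow).symm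
    have hFswap : Summable (F ∘ (Equiv.prodComm G G)) := (Equiv.summable_iff _).mpr hF
    have h2 : ∑' p : G × G, F p = ∑' q : G × G, F ((Equiv.prodComm G G) q) :=
      (Equiv.tsum_eq (Equiv.prodComm G G) F).symm
    have h3 : ∑' q : G × G, (F ∘ (Equiv.prodComm G G)) q
        = ∑' a : G, ∑' g : G, F (g, a) :=
      Summable.tsum_prod' hFswap (fun a => hFswap.prod_factor a)
    rw [h1, h2]
    have h4 : ∑' q : G × G, F ((Equiv.prodComm G G) q) = ∑' a : G, ∑' g : G, F (g, a) := h3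
    rw [h4]
    apply tsum_congr; intro a
    have h5 : (fun g => F (g, a)) = fun g => mr κ a * |mr ρ g - mr ρ (a⁻¹ * g)| := rfl
    rw [h5, tsum_mul_left]
    congr 1
    unfold tv
    exact tsum_congr fun x => abs_sub_comm _ _
  -- put it together
  have habs_sum : Summable fun g => |(x g - y g) * H g| :=
    Summable.of_nonneg_of_le (fun g => abs_nonneg _) habs (hu.add hv)
  calc |∑' g : G, (x g - y g) * H g| ≤ ∑' g : G, |(x g - y g) * H g| := by
        have := norm_tsum_le_tsum_norm (f := fun g : G => (x g - y g) * H g)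
          (by simpa only [Real.norm_eq_abs] using habs_sum)
        simpa only [Real.norm_eq_abs] using this
    _ ≤ ∑' g : G, (u g + v g) := Summable.tsum_le_tsum habs habs_sum (hu.add hv)
    _ = (∑' g : G, u g) + ∑' g : G, v g := Summable.tsum_add hu hv
    _ ≤ tv ρ b + ∑' a : G, mr κ a * tv ρ a := by
        apply add_le_add
        · exact le_of_eq rfl
        · calc (∑' g : G, v g) ≤ ∑' g, ∑' a : G, F (g, a) := Summable.tsum_le_tsum hV hv hVsum
          _ = ∑' a : G, mr κ a * tv ρ a := hswap

end

section
set_option linter.unusedSectionVars false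
variable {G : Type*} [Group G]
open Filter

lemma tendsto_bnd (ρ : ℕ → PMF G) (κ : PMF G)
    (hTV : ∀ g : G, Tendsto (fun m => tv (ρ m) g) atTop (nhds 0)) (b : G) :
    Tendsto (fun m => tv (ρ m) b + ∑' a : G, mr κ a * tv (ρ m) a) atTop (nhds 0) := by
  have h2 : Tendsto (fun m => ∑' a : G, mr κ a * tv (ρ m) a) atTop (nhds 0) := by
    have := tendsto_tsum_of_dominated_convergence (f := fun m a => mr κ a * tv (ρ m) a)
      (g := fun _ => 0) (bound := fun a => 2 * mr κ a) ((summable_mr κ).mul_left 2)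
      (fun a => by simpa using (hTV a).const_mul (mr κ a))
      (Filter.Eventually.of_forall fun m => fun a => by
        rw [Real.norm_eq_abs, abs_of_nonneg (mul_nonneg (mr_nonneg _ _) (tv_nonneg _ _))]
        calc mr κ a * tv (ρ m) a ≤ mr κ a * 2 :=
          mul_le_mul_of_nonneg_left (tv_le_two _ _) (mr_nonneg _ _)
        _ = 2 * mr κ a := by ring)
    simpa using this
  have := (hTV b).add h2
  simpa using this

lemma tsum_pmf_mul_le_one (ρ : PMF G) (H : G → ℝ≥0∞) (hH : ∀ c, H c ≤ 1) :
    (∑' g : G, ρ g * H g) ≤ 1 := by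
  calc (∑' g : G, ρ g * H g) ≤ ∑' g : G, ρ g :=
    ENNReal.tsum_le_tsum fun g => mul_le_of_le_one_right zero_le (hH g)
  _ = 1 := PMF.tsum_coe ρ

lemma toReal_tsum_pmf_mul (ρ : PMF G) (H : G → ℝ≥0∞) (hH : ∀ c, H c ≤ 1) :
    (∑' g : G, ρ g * H g).toReal = ∑' g : G, mr ρ g * (H g).toReal := by
  rw [ENNReal.tsum_toReal_eq]
  · apply tsum_congr; intro g
    rw [ENNReal.toReal_mul]; rfl
  · intro g
    exact ENNReal.mul_ne_top (PMF.apply_ne_top ρ g)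
      (lt_of_le_of_lt (hH g) ENNReal.one_lt_top).ne

lemma mr_conv_eq (κ ρ τ : PMF G) (h : ∀ g, τ g = ∑' a : G, κ a * ρ (a⁻¹ * g)) :
    ∀ g, mr τ g = ∑' a : G, mr κ a * mr ρ (a⁻¹ * g) := by
  intro g
  unfold mr
  rw [h g, ENNReal.tsum_toReal_eq]
  · apply tsum_congr; intro a; rw [ENNReal.toReal_mul]
  · intro a
    exact ENNReal.mul_ne_top (PMF.apply_ne_top κ a) (PMF.apply_ne_top ρ _)

end


section
open MeasureTheory
variable {G : Type*} [Group G] [Countable G] [MeasurableSpace G] [DiscreteMeasurableSpace G]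
variable {ν : PMF G} {P : Measure (ℕ → G)} [IsProbabilityMeasure P]

lemma tail_rep {A : Set (ℕ → G)} (hA : MeasurableSet[tailAlg rightWalk] A) (N : ℕ) :
    ∃ S : Set (ℕ → G), MeasurableSet S ∧
      A = (fun ω => fun i => rightWalk (N + i) ω) ⁻¹' S := by
  have htop : (⊤ : MeasurableSpace G) = ‹MeasurableSpace G› :=
    le_antisymm (fun s _ => MeasurableSet.of_discrete) le_top
  have h1 : MeasurableSet[⨆ i, ⨆ _ : N ≤ i, MeasurableSpace.comap (rightWalk (G := G) i) ⊤] A :=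
    iInf_le (fun j => ⨆ i, ⨆ _ : j ≤ i, MeasurableSpace.comap (rightWalk (G := G) i) ⊤) N A hA
  have h2 : (⨆ i, ⨆ _ : N ≤ i, MeasurableSpace.comap (rightWalk (G := G) i) ⊤)
      ≤ MeasurableSpace.comap (fun ω => fun i => rightWalk (N + i) ω) MeasurableSpace.pi := by
    apply iSup_le; intro i; apply iSup_le; intro hi
    have hcomp : rightWalk (G := G) i =
        (fun v : ℕ → G => v (i - N)) ∘ (fun ω => fun j => rightWalk (N + j) ω) := by
      funext ω
      show rightWalk i ω = rightWalk (N + (i - N)) ω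
      rw [Nat.add_sub_cancel' hi]
    rw [hcomp, ← MeasurableSpace.comap_comp]
    apply MeasurableSpace.comap_mono
    rw [htop]
    exact (measurable_pi_apply (i - N)).comap_le
  obtain ⟨S, hSm, hSA⟩ := h2 A h1
  exact ⟨S, hSm, hSA.symm⟩

lemma tail_decomp (hiid : IsIIDMeasure ν P) (k m : ℕ) (f : ℕ → G) {S : Set (ℕ → G)}
    (hS : MeasurableSet S) :
    P ((fun ω => fun i => rightWalk (k + m + i) ω) ⁻¹' S ∩ cylE k f) =
      wgt ν k f * ∑' g : G, convPow ν m g *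
        P ((fun ω : ℕ → G => fun i => (rightWalk k f * g) * rightWalk i ω) ⁻¹' S) := by
  set T : G → Set (ℕ → G) := fun c => (fun ω : ℕ → G => fun i => c * rightWalk i ω) ⁻¹' S with hT
  have hTmeas : ∀ c, MeasurableSet (T c) := fun c =>
    (measurable_pi_lambda _ fun i => measurable_mulG measurable_const (measurable_rightWalk i)) hS
  set B : G → Set (ℕ → G) := fun g => cylE k f ∩ shf k ⁻¹' (rightWalk m ⁻¹' {g}) with hB
  have hdetB : ∀ g, Det (k + m) (B g) := by
    rintro g ω ω' hagree ⟨h1, h2⟩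
    constructor
    · intro i hi
      rw [← hagree i (lt_of_lt_of_le hi (Nat.le_add_right k m))]
      exact h1 i hi
    · simp only [Set.mem_preimage, Set.mem_singleton_iff] at h2 ⊢
      rw [← h2]
      apply rightWalk_congr
      intro i hi
      show ω' (k + i) = ω (k + i)
      exact (hagree (k + i) (by omega)).symm
  have hdecomp : (fun ω : ℕ → G => fun i => rightWalk (k + m + i) ω) ⁻¹' S ∩ cylE k f =
      ⋃ g : G, B g ∩ shf (k + m) ⁻¹' (T (rightWalk k f * g)) := by
    ext ω
    simp only [Set.mem_inter_iff, Set.mem_iUnion, Set.mem_preimage, Set.mem_singleton_iff,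
      hB, hT]
    constructor
    · rintro ⟨hS', hcyl⟩
      have hwk : rightWalk k ω = rightWalk k f := rightWalk_congr hcyl
      refine ⟨rightWalk m (shf k ω), ⟨hcyl, rfl⟩, ?_⟩
      have heq : (fun i => rightWalk (k + m + i) ω)
          = fun i => (rightWalk k f * rightWalk m (shf k ω)) * rightWalk i (shf (k + m) ω) := by
        funext i
        rw [rightWalk_add (k + m) i ω, rightWalk_add k m ω, hwk]
      rwa [heq] at hS'
    · rintro ⟨g, ⟨hcyl, hrel⟩, hmem⟩
      refine ⟨?_, hcyl⟩
      have hwk : rightWalk k ω = rightWalk k f := rightWalk_congr hcyl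
      have heq : (fun i => rightWalk (k + m + i) ω)
          = fun i => (rightWalk k f * g) * rightWalk i (shf (k + m) ω) := by
        funext i
        rw [rightWalk_add (k + m) i ω, rightWalk_add k m ω, hwk, hrel]
      rw [heq]
      exact hmem
  rw [hdecomp, measure_iUnion]
  · have hterm : ∀ g : G, P (B g ∩ shf (k + m) ⁻¹' (T (rightWalk k f * g)))
        = wgt ν k f * (convPow ν m g * P (T (rightWalk k f * g))) := by
      intro g
      rw [indep_det hiid (hdetB g) (hTmeas _)]
      rw [hB]
      show P (cylE k f ∩ shf k ⁻¹' (rightWalk m ⁻¹' {g})) * P (T (rightWalk k f * g)) = _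
      rw [indep_cylE hiid k f (det_measurable (det_walk m g)), law_walk hiid]
      ring
    rw [tsum_congr hterm, ENNReal.tsum_mul_left]
  · intro g g' hgg'
    apply Set.disjoint_left.mpr
    rintro ω ⟨⟨_, h1⟩, _⟩ ⟨⟨_, h2⟩, _⟩
    simp only [Set.mem_preimage, Set.mem_singleton_iff] at h1 h2
    exact hgg' (h1 ▸ h2 ▸ rfl)
  · intro g
    exact (det_measurable (hdetB g)).inter (measurable_shf (k + m) (hTmeas _))

end

/-- Kaimanovich–Vershik: if a non-degenerate measure `ν` on a countable group `G`
satisfies `‖g·ν^{*n} − ν^{*n}‖ → 0` (total variation) for every `g ∈ G`, then the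
Poisson (tail) boundary of the right `ν`-random walk is trivial. -/
theorem stmt_9 {G : Type*} [Group G] [Countable G]
    [MeasurableSpace G] [DiscreteMeasurableSpace G]
    (ν : PMF G) (hnd : NonDegenerate ν)
    (hTV : ∀ g : G, Tendsto
      (fun n => ∑' x : G, |((convPow ν n) (g⁻¹ * x)).toReal - ((convPow ν n) x).toReal|)
      atTop (nhds 0)) :
    ∀ P : Measure (ℕ → G), IsProbabilityMeasure P → IsIIDMeasure ν P →
      TailTrivial rightWalk P := by
  intro P hP hiid
  haveI := hP
  intro A hA
  obtain ⟨S0, hS0, hA0⟩ := tail_rep hA 0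
  have hAmeas : MeasurableSet A := by
    rw [hA0]
    exact (measurable_pi_lambda _ fun i => measurable_rightWalk (0 + i)) hS0
  have key : ∀ (k : ℕ) (f : ℕ → G), P (A ∩ cylE k f) = wgt ν k f * P A := by
    intro k f
    set b := rightWalk k f with hbdef
    choose S hSmeas hSrep using fun m => tail_rep hA (k + m)
    set H : ℕ → G → ℝ≥0∞ :=
      fun m c => P ((fun ω : ℕ → G => fun i => c * rightWalk i ω) ⁻¹' S m) with hHdef
    have hH1 : ∀ m c, H m c ≤ 1 := fun m c => prob_le_one
    have e1 : ∀ m, P (A ∩ cylE k f) = wgt ν k f * ∑' g : G, convPow ν m g * H m (b * g) := by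
      intro m
      rw [hSrep m]
      exact tail_decomp hiid k m f (hSmeas m)
    have e2 : ∀ m, P A = ∑' g : G, convPow ν (k + m) g * H m g := by
      intro m
      have hre : (fun ω : ℕ → G => fun i => rightWalk (0 + (k + m) + i) ω)
          = fun ω => fun i => rightWalk (k + m + i) ω := by
        funext ω i; rw [Nat.zero_add]
      have h0 := tail_decomp (ν := ν) hiid 0 (k + m) (fun _ => (1:G)) (hSmeas m)
      rw [hre, ← hSrep m, cylE_zero, Set.inter_univ] at h0
      have hw0 : wgt ν 0 (fun _ => (1:G)) = 1 := by simp [wgt]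
      rw [hw0, one_mul] at h0
      rw [h0]
      apply tsum_congr; intro g
      congr 1
      show H m (rightWalk 0 (fun _ => (1:G)) * g) = H m g
      rw [rightWalk_zero, one_mul]
    set κ := convPow ν k with hκdef
    have hbar : ∀ m, (∑' g : G, convPow ν m g * H m (b * g)).toReal
        = ∑' g : G, mr (convPow ν m) g * (H m (b * g)).toReal := fun m =>
      toReal_tsum_pmf_mul (convPow ν m) (fun g => H m (b * g)) (fun g => hH1 m _)
    have hbar2 : ∀ m, (∑' g : G, convPow ν (k + m) g * H m g).toReal
        = ∑' g : G, mr (convPow ν (k + m)) g * (H m g).toReal := fun m =>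
      toReal_tsum_pmf_mul _ _ (hH1 m)
    have hmain : ∀ m, |(P (A ∩ cylE k f)).toReal - (wgt ν k f).toReal * (P A).toReal|
        ≤ (wgt ν k f).toReal *
          (tv (convPow ν m) b + ∑' a : G, mr κ a * tv (convPow ν m) a) := by
      intro m
      have hc := main_bound κ (convPow ν m) (convPow ν (k + m))
        (mr_conv_eq κ (convPow ν m) (convPow ν (k + m)) (fun g => convPow_apply_add ν k m g))
        b (fun c => (H m c).toReal) (fun c => ENNReal.toReal_nonneg)
        (fun c => by
          have := ENNReal.toReal_mono ENNReal.one_ne_top (hH1 m c)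
          simpa using this)
      have lhs : (P (A ∩ cylE k f)).toReal - (wgt ν k f).toReal * (P A).toReal
          = (wgt ν k f).toReal * ((∑' g : G, mr (convPow ν m) g * (H m (b * g)).toReal)
            - ∑' g : G, mr (convPow ν (k + m)) g * (H m g).toReal) := by
        rw [e1 m, ENNReal.toReal_mul, hbar m, e2 m, hbar2 m]; ring
      rw [lhs, abs_mul, abs_of_nonneg ENNReal.toReal_nonneg]
      exact mul_le_mul_of_nonneg_left hc ENNReal.toReal_nonneg
    have hten : Tendsto (fun m => (wgt ν k f).toReal *
        (tv (convPow ν m) b + ∑' a : G, mr κ a * tv (convPow ν m) a)) atTop (nhds 0) := by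
      have h := tendsto_bnd (fun m => convPow ν m) κ (fun g => hTV g) b
      have h2 := h.const_mul ((wgt ν k f).toReal)
      simpa [mul_comm] using h2
    have hD : |(P (A ∩ cylE k f)).toReal - (wgt ν k f).toReal * (P A).toReal| ≤ 0 :=
      ge_of_tendsto' hten hmain
    have hDeq : (P (A ∩ cylE k f)).toReal = (wgt ν k f).toReal * (P A).toReal := by
      have hnn := abs_nonneg ((P (A ∩ cylE k f)).toReal - (wgt ν k f).toReal * (P A).toReal)
      have h0 := abs_eq_zero.mp (le_antisymm hD hnn)
      linarith
    have hfin1 : P (A ∩ cylE k f) ≠ ⊤ := measure_ne_top P _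
    have hfin2 : wgt ν k f * P A ≠ ⊤ :=
      ENNReal.mul_ne_top (lt_of_le_of_lt (wgt_le_one k f) ENNReal.one_lt_top).ne
        (measure_ne_top P _)
    apply (ENNReal.toReal_eq_toReal_iff' hfin1 hfin2).mp
    rw [ENNReal.toReal_mul]
    exact hDeq
  have hext : P.restrict A = P A • P := by
    apply ext_of_generate_finite cylSet generateFrom_cylSet isPiSystem_cylSet
    · rintro s ⟨n, f, rfl⟩
      rw [Measure.restrict_apply (measurable_cylE n f), Set.inter_comm, key n f,
        Measure.smul_apply, smul_eq_mul, P_cylE hiid n f, mul_comm]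
    · rw [Measure.restrict_apply MeasurableSet.univ]
      simp
  have hAA := congrArg (fun μ : Measure (ℕ → G) => μ A) hext
  simp only [Measure.smul_apply, smul_eq_mul] at hAA
  rw [Measure.restrict_apply hAmeas, Set.inter_self] at hAA
  by_cases h0 : P A = 0
  · exact Or.inl h0
  · right
    have hne : P A ≠ ⊤ := measure_ne_top P A
    have hmul : P A * 1 = P A * P A := by rw [mul_one]; exact hAA
    exact ((ENNReal.mul_right_inj h0 hne).mp hmul).symm
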